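/- Let 𝔪 be a non-degenerate graded nilpotent Lie algebra over a field of characteristic 0, and let y ∈ 𝔪_{-1} be such that rank(ad y) = 1. Then there exists a degree-preserving derivation d of 𝔪 with d(𝔪_{-i}) = 0 for all i ≥ 2 and rank d = 1. Specifically, choosing x ∈ 𝔪_{-1} with [x,y] ≠ 0 and writing 𝔪_{-1} = ⟨x⟩ ⊕ W where W = ker(ad y) ∩ 𝔪_{-1}, the linear map d defined by d(x) = y, d(W) = 0, d(𝔪_{-i}) = 0 for i ≥ 2 is a derivation of 𝔪. -/

import Mathlib

open Module LinearMap

/-- if `y ∈ 𝔪_{-1}` has `rank (ad y) = 1` in a non-degenerate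
GNLA, then the linear map `d` with `d x = y`, `d(W) = 0`
(`W = ker (ad y) ∩ 𝔪_{-1}`) and `d(𝔪_{-i}) = 0` for `i ≥ 2` is a
degree-preserving derivation of rank 1 vanishing on all `𝔪_{-i}`, `i ≥ 2`. -/
theorem stmt2 {k L : Type*} [Field k] [CharZero k] [LieRing L] [LieAlgebra k L]
    (m : ℕ → Submodule k L)
    (hsum : DirectSum.IsInternal fun i => m i)
    (h0 : m 0 = ⊥)
    (μ : ℕ) (hdepth : ∀ i, μ < i → m i = ⊥)
    (hbr : ∀ i j, ∀ x ∈ m i, ∀ y ∈ m j, ⁅x, y⁆ ∈ m (i + j))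
    (hgen : ∀ i, 1 ≤ i →
      m (i + 1) = Submodule.span k {z | ∃ u ∈ m 1, ∃ v ∈ m i, ⁅u, v⁆ = z})
    (hnd : ∀ y ∈ m 1, (∀ z : L, ⁅y, z⁆ = 0) → y = 0)
    (y : L) (hy : y ∈ m 1)
    (hrk : finrank k (LinearMap.range (LieAlgebra.ad k L y)) = 1)
    (x : L) (hx : x ∈ m 1) (hxy : ⁅x, y⁆ ≠ 0) :
    ∃ d : L →ₗ[k] L,
      (∀ a b : L, d ⁅a, b⁆ = ⁅d a, b⁆ + ⁅a, d b⁆) ∧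
      (∀ i, ∀ z ∈ m i, d z ∈ m i) ∧
      (∀ i, 2 ≤ i → ∀ z ∈ m i, d z = 0) ∧
      finrank k (LinearMap.range d) = 1 ∧
      d x = y ∧
      (∀ w ∈ m 1, ⁅y, w⁆ = 0 → d w = 0) := by
  classical
  set v : L := ⁅y, x⁆ with hv_def
  have hv : v ≠ 0 := by
    rw [hv_def, ← neg_ne_zero, lie_skew]
    exact hxy
  have hvrange : v ∈ LinearMap.range (LieAlgebra.ad k L y) := ⟨x, rfl⟩
  have hfin : Module.Finite k (LinearMap.range (LieAlgebra.ad k L y)) :=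
    Module.finite_of_finrank_eq_succ hrk
  -- the range of `ad y` is exactly the span of `v = ⁅y, x⁆`
  have hrange : LinearMap.range (LieAlgebra.ad k L y) = Submodule.span k {v} := by
    refine (Submodule.eq_of_le_of_finrank_le ?_ ?_).symm
    · exact Submodule.span_le.2 (by simp [hvrange])
    · rw [hrk, finrank_span_singleton hv]
  -- the coordinate functional: `⁅y, z⁆ = g z • v` for all `z`
  set g : L →ₗ[k] k :=
    (LinearEquiv.coord k L v hv).toLinearMap ∘ₗ
      ((LieAlgebra.ad k L y).codRestrict (Submodule.span k {v})
        (fun z => hrange ▸ LinearMap.mem_range_self _ z)) with hg_def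
  have hgv : ∀ z : L, g z • v = ⁅y, z⁆ := by
    intro z
    have := LinearEquiv.coord_apply_smul k L v hv
      ⟨⁅y, z⁆, hrange ▸ LinearMap.mem_range_self (LieAlgebra.ad k L y) z⟩
    simpa [hg_def] using this
  have hv2 : v ∈ m 2 := by
    have := hbr 1 1 y hy x hx
    simpa using this
  have hdisj := (hsum.submodule_iSupIndep).pairwiseDisjoint
  -- `g` vanishes on `m n` for `n ≠ 1`
  have hgvanish : ∀ n, n ≠ 1 → ∀ w ∈ m n, g w = 0 := by
    intro n hn w hw
    rcases Nat.eq_zero_or_pos n with h | hpos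
    · subst h; rw [h0] at hw; simp at hw; simp [hw]
    by_contra hgw
    have hn2 : (2 : ℕ) ≠ 1 + n := by omega
    have hbw : ⁅y, w⁆ ∈ m (1 + n) := hbr 1 n y hy w hw
    have hvmem : v ∈ m (1 + n) := by
      have : v = (g w)⁻¹ • ⁅y, w⁆ := by
        rw [← hgv w, smul_smul, inv_mul_cancel₀ hgw, one_smul]
      rw [this]; exact Submodule.smul_mem _ _ hbw
    exact hv ((Submodule.disjoint_def.1 (hdisj hn2)) v hv2 hvmem)
  have htop : (⨆ i, m i : Submodule k L) = ⊤ := hsum.submodule_iSup_eq_top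
  -- `g` vanishes on all brackets
  have hgbr : ∀ a b : L, g ⁅a, b⁆ = 0 := by
    intro a b
    have ha : a ∈ ⨆ i, m i := htop ▸ Submodule.mem_top
    refine Submodule.iSup_induction (x := a) m (motive := fun a => ∀ b, g ⁅a, b⁆ = 0) ha
      ?_ (by intro b; simp) (fun a₁ a₂ h₁ h₂ b => by
        show g ⁅a₁ + a₂, b⁆ = 0
        rw [add_lie, map_add, show g ⁅a₁, b⁆ = 0 from h₁ b, show g ⁅a₂, b⁆ = 0 from h₂ b,
          add_zero]) b
    intro i a' ha' b'
    have hb : b' ∈ ⨆ j, m j := htop ▸ Submodule.mem_top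
    refine Submodule.iSup_induction (x := b') m (motive := fun b' => g ⁅a', b'⁆ = 0) hb
      ?_ (by simp) (fun b₁ b₂ h₁ h₂ => by
        show g ⁅a', b₁ + b₂⁆ = 0
        rw [lie_add, map_add, show g ⁅a', b₁⁆ = 0 from h₁, show g ⁅a', b₂⁆ = 0 from h₂,
          add_zero])
    intro j b'' hb''
    rcases Nat.eq_zero_or_pos i with h | hi
    · subst h; rw [h0] at ha'; simp at ha'; simp [ha']
    rcases Nat.eq_zero_or_pos j with h | hj
    · subst h; rw [h0] at hb''; simp at hb''; simp [hb'']
    exact hgvanish (i + j) (by omega) _ (hbr i j a' ha' b'' hb'')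
  have hgx : g x = 1 := by
    have := hgv x
    rw [hv_def] at this
    exact smul_left_injective k hv (by simpa [hv_def] using this)
  refine ⟨LinearMap.toSpanSingleton k L y ∘ₗ g, ?_, ?_, ?_, ?_, ?_, ?_⟩
  · intro a b
    have hda : ∀ z : L, (LinearMap.toSpanSingleton k L y ∘ₗ g) z = g z • y := fun z => rfl
    rw [hda, hda, hda, hgbr a b, zero_smul, smul_lie, lie_smul, ← hgv b, ← lie_skew a y,
      ← hgv a, smul_neg, smul_smul, smul_smul, mul_comm (g b) (g a)]
    exact (add_neg_cancel _).symm
  · intro i z hz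
    rcases eq_or_ne i 1 with h | h
    · subst h
      exact Submodule.smul_mem _ _ hy
    · have : g z = 0 := hgvanish i h z hz
      show g z • y ∈ m i
      rw [this, zero_smul]; exact Submodule.zero_mem _
  · intro i hi z hz
    show g z • y = 0
    rw [hgvanish i (by omega) z hz, zero_smul]
  · have hy0 : y ≠ 0 := fun h => hxy (by rw [h, lie_zero])
    have : LinearMap.range (LinearMap.toSpanSingleton k L y ∘ₗ g) = Submodule.span k {y} := by
      apply le_antisymm
      · rintro _ ⟨z, rfl⟩
        exact Submodule.smul_mem _ _ (Submodule.mem_span_singleton_self y)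
      · rw [Submodule.span_le, Set.singleton_subset_iff]
        exact ⟨x, by show g x • y = y; rw [hgx, one_smul]⟩
    rw [this, finrank_span_singleton hy0]
  · show g x • y = y
    rw [hgx, one_smul]
  · intro w _ hw
    show g w • y = 0
    have : g w • v = 0 := by rw [hgv w, hw]
    rcases smul_eq_zero.1 this with h | h
    · rw [h, zero_smul]
    · exact absurd h hv
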